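/- Let G be a finite simple maximal outerplanar graph and let xy be an edge of G with d_x ≤ d_y whose common neighborhood is N(x) ∩ N(y) = {w, z} with w ≠ z, such that |N(x) ∩ N(w) \ {y}| = 0, |N(x) ∩ N(z) \ {y}| = 1, |N(y) ∩ N(w) \ {x}| = 1, and |N(y) ∩ N(z) \ {x}| = 0. Then the Lin–Lu–Yau curvature satisfies κ(x,y) = 5/d_x + 5/d_y − 2 if d_y < 2·d_x, and κ(x,y) = 4/d_x + 7/d_y − 2 if d_y ≥ 2·d_x. -/

import Mathlib

open SimpleGraph

/-- `H` is a minor of `G`: there is a family of nonempty, connected, pairwise disjoint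
branch sets in `G`, one for each vertex of `H`, with an edge of `G` between the branch
sets corresponding to each edge of `H`. -/
def SimpleGraph.IsMinorOf {W : Type*} {V : Type*} (H : SimpleGraph W) (G : SimpleGraph V) :
    Prop :=
  ∃ B : W → Set V,
    (∀ w, (G.induce (B w)).Connected) ∧
    (Pairwise fun w₁ w₂ => Disjoint (B w₁) (B w₂)) ∧
    ∀ ⦃w₁ w₂⦄, H.Adj w₁ w₂ → ∃ u ∈ B w₁, ∃ v ∈ B w₂, G.Adj u v

/-- A graph is outerplanar iff it has no `K₄` minor and no `K_{2,3}` minor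
(Chartrand–Harary). -/
def Outerplanar {V : Type*} (G : SimpleGraph V) : Prop :=
  ¬ (completeGraph (Fin 4)).IsMinorOf G ∧
  ¬ (completeBipartiteGraph (Fin 2) (Fin 3)).IsMinorOf G

/-- A graph is planar iff it has no `K₅` minor and no `K_{3,3}` minor (Wagner). -/
def Planar {V : Type*} (G : SimpleGraph V) : Prop :=
  ¬ (completeGraph (Fin 5)).IsMinorOf G ∧
  ¬ (completeBipartiteGraph (Fin 3) (Fin 3)).IsMinorOf G

/-- A maximal outerplanar graph: outerplanar, and adding any edge between two distinct
non-adjacent vertices destroys outerplanarity. -/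
def MaximalOuterplanar {V : Type*} (G : SimpleGraph V) : Prop :=
  Outerplanar G ∧ ∀ x y : V, x ≠ y → ¬ G.Adj x y →
    ¬ Outerplanar (G ⊔ fromEdgeSet {s(x, y)})

/-- The (normalized) graph Laplacian `Δf(v) = (1/d_v) ∑_{u ∈ N(v)} (f u - f v)`. -/
noncomputable def graphLap {V : Type*} (G : SimpleGraph V) [Fintype V] [DecidableRel G.Adj]
    (f : V → ℤ) (v : V) : ℝ :=
  (∑ u ∈ G.neighborFinset v, ((f u : ℝ) - (f v : ℝ))) / (G.degree v)

/-- The Lin–Lu–Yau curvature of the pair `(x, y)`, via the limit-free Laplacian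
formulation: the infimum of `Δf(x) - Δf(y)` over integer-valued functions `f` that are
`1`-Lipschitz w.r.t. the graph distance and satisfy `f y - f x = 1`. -/
noncomputable def llyCurv {V : Type*} (G : SimpleGraph V) [Fintype V] [DecidableRel G.Adj]
    (x y : V) : ℝ :=
  sInf { r : ℝ | ∃ f : V → ℤ,
    (∀ u v : V, |f u - f v| ≤ (G.dist u v : ℤ)) ∧
    f y - f x = 1 ∧
    r = graphLap G f x - graphLap G f y }


section Bridge
variable {V : Type*} {G : SimpleGraph V} {x p : V}

lemma adj_sup_iff (hne : x ≠ p) {u v : V} :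
    (G ⊔ fromEdgeSet {s(x,p)}).Adj u v ↔ G.Adj u v ∨ (u = x ∧ v = p) ∨ (u = p ∧ v = x) := by
  constructor
  · rintro (h | h)
    · exact Or.inl h
    · rw [fromEdgeSet_adj] at h
      rcases h with ⟨h1, h2⟩
      simp only [Set.mem_singleton_iff, Sym2.eq_iff] at h1
      tauto
  · rintro (h | ⟨rfl, rfl⟩ | ⟨rfl, rfl⟩)
    · exact Or.inl h
    · refine Or.inr ?_
      rw [fromEdgeSet_adj]
      exact ⟨by simp, hne⟩
    · refine Or.inr ?_
      rw [fromEdgeSet_adj]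
      exact ⟨by simp [Sym2.eq_swap], hne.symm⟩

lemma induce_sup_eq (hne : x ≠ p) {B : Set V} (h : ¬(x ∈ B ∧ p ∈ B)) :
    (G ⊔ fromEdgeSet {s(x,p)}).induce B = G.induce B := by
  ext u v
  constructor
  · intro hadj
    have : (G ⊔ fromEdgeSet {s(x,p)}).Adj u.1 v.1 := hadj
    rcases (adj_sup_iff hne).mp this with hG | ⟨hux, hvp⟩ | ⟨hup, hvx⟩
    · exact hG
    · exact absurd ⟨hux ▸ u.2, hvp ▸ v.2⟩ h
    · exact absurd ⟨hvx ▸ v.2, hup ▸ u.2⟩ h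
  · intro hadj
    exact Or.inl hadj

variable {A : Set V}

lemma walk_side (hGA : ∀ ⦃u v : V⦄, G.Adj u v → (u ∈ A ↔ v ∈ A)) {a b : V}
    (wk : G.Walk a b) (ha : a ∈ A) : b ∈ A := by
  induction wk with
  | nil => exact ha
  | cons h q ih => exact ih ((hGA h).mp ha)

lemma induced_side (hGA : ∀ ⦃u v : V⦄, G.Adj u v → (u ∈ A ↔ v ∈ A)) {B : Set V}
    (hc : (G.induce B).Connected) {a : V} (haB : a ∈ B) (haA : a ∈ A) : B ⊆ A := by
  intro b hbB
  obtain ⟨wk⟩ := hc.preconnected ⟨a, haB⟩ ⟨b, hbB⟩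
  have : ∀ {s t : B} (w' : (G.induce B).Walk s t), (s:V) ∈ A → (t:V) ∈ A := by
    intro s t w'
    induction w' with
    | nil => exact id
    | cons h q ih =>
      intro hs
      exact ih ((hGA h).mp hs)
  exact this wk haA
end Bridge

section Surgery
variable {V : Type*} {G : SimpleGraph V} {x p : V} {A : Set V}

lemma find_return (hne : x ≠ p)
    (hGA : ∀ ⦃u v : V⦄, G.Adj u v → (u ∈ A ↔ v ∈ A)) (hxA : x ∈ A) (hpA : p ∉ A)
    {B : Set V} :
    ∀ (c b : B) (wk : ((G ⊔ fromEdgeSet {s(x,p)}).induce B).Walk c b),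
      (c:V) ∉ A → (b:V) ∈ A →
      ∃ (hxB : x ∈ B) (wk2 : ((G ⊔ fromEdgeSet {s(x,p)}).induce B).Walk ⟨x,hxB⟩ b),
        wk2.length < wk.length := by
  intro c b wk
  induction wk with
  | nil => intro hc hb; exact absurd hb hc
  | @cons c d b h q ih =>
    intro hc hb
    have h' : (G ⊔ fromEdgeSet {s(x,p)}).Adj c.1 d.1 := h
    by_cases hd : (d : V) ∈ A
    · rcases (adj_sup_iff hne).mp h' with hG | ⟨hcx, hdp⟩ | ⟨hcp, hdx⟩
      · exact absurd ((hGA hG).mpr hd) hc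
      · exact absurd (hcx ▸ hxA) hc
      · have hxB : x ∈ B := hdx ▸ d.2
        have hde : d = ⟨x, hxB⟩ := Subtype.ext hdx
        refine ⟨hxB, q.copy hde rfl, ?_⟩
        rw [SimpleGraph.Walk.length_copy]
        simp [SimpleGraph.Walk.length_cons]
    · obtain ⟨hxB, wk2, hlt⟩ := ih hd hb
      exact ⟨hxB, wk2, by simp [SimpleGraph.Walk.length_cons]; omega⟩

lemma surgery (hne : x ≠ p)
    (hGA : ∀ ⦃u v : V⦄, G.Adj u v → (u ∈ A ↔ v ∈ A)) (hxA : x ∈ A) (hpA : p ∉ A)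
    {B : Set V} :
    ∀ (n : ℕ) (a b : B) (wk : ((G ⊔ fromEdgeSet {s(x,p)}).induce B).Walk a b),
      wk.length ≤ n → ∀ (ha : (a:V) ∈ A) (hb : (b:V) ∈ A),
      (G.induce (B ∩ A)).Reachable ⟨a.1, a.2, ha⟩ ⟨b.1, b.2, hb⟩ := by
  intro n
  induction n with
  | zero =>
    intro a b wk hlen ha hb
    have : a = b := wk.eq_of_length_eq_zero (Nat.le_zero.mp hlen)
    subst this
    exact Reachable.refl _
  | succ n ihn =>
    intro a b wk hlen ha hb
    cases wk with
    | nil => exact Reachable.refl _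
    | @cons a c b h q =>
      have h' : (G ⊔ fromEdgeSet {s(x,p)}).Adj a.1 c.1 := h
      rcases (adj_sup_iff hne).mp h' with hG | ⟨hax, hcp⟩ | ⟨hap, hcx⟩
      · have hc : (c : V) ∈ A := (hGA hG).mp ha
        have hadj : (G.induce (B ∩ A)).Adj ⟨a.1, a.2, ha⟩ ⟨c.1, c.2, hc⟩ := hG
        have hq : q.length ≤ n := by
          simp [SimpleGraph.Walk.length_cons] at hlen; omega
        exact (hadj.reachable).trans (ihn c b q hq hc hb)
      · have hc : (c : V) ∉ A := by rw [hcp]; exact hpA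
        obtain ⟨hxB, wk2, hlt⟩ := find_return hne hGA hxA hpA c b q hc hb
        have hq : wk2.length ≤ n := by
          simp [SimpleGraph.Walk.length_cons] at hlen; omega
        have := ihn ⟨x, hxB⟩ b wk2 hq hxA hb
        have hax' : (⟨a.1, a.2, ha⟩ : (B ∩ A : Set V)) = ⟨x, hxB, hxA⟩ := by
          exact Subtype.ext hax
        rw [hax']
        exact this
      · exact absurd (hap ▸ ha) hpA
end Surgery

section Transfer
variable {V : Type*} {G : SimpleGraph V} {x p : V}

/-- packaged minor data -/
def MinorData {W : Type*} (H : SimpleGraph W) (G' : SimpleGraph V) (B : W → Set V) : Prop :=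
  (∀ w, (G'.induce (B w)).Connected) ∧
    (Pairwise fun w₁ w₂ => Disjoint (B w₁) (B w₂)) ∧
    ∀ ⦃w₁ w₂⦄, H.Adj w₁ w₂ → ∃ u ∈ B w₁, ∃ v ∈ B w₂, G'.Adj u v

lemma case1_aux {A : Set V} (hne : x ≠ p)
    (hGA : ∀ ⦃u v : V⦄, G.Adj u v → (u ∈ A ↔ v ∈ A)) (hxA : x ∈ A) (hpA : p ∉ A)
    {W : Type*} {H : SimpleGraph W} {B : W → Set V}
    (hB : MinorData H (G ⊔ fromEdgeSet {s(x,p)}) B)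
    (w0 : W) (hx0 : x ∈ B w0) (hp0 : p ∈ B w0)
    (hside : ∀ w, w ≠ w0 → B w ⊆ A) :
    ∃ B' : W → Set V, MinorData H G B' := by
  obtain ⟨hBc, hBd, hBe⟩ := hB
  classical
  refine ⟨Function.update B w0 (B w0 ∩ A), ?_, ?_, ?_⟩
  · intro w
    by_cases hw : w = w0
    · subst hw
      rw [Function.update_self, connected_iff]
      refine ⟨?_, ⟨⟨x, hx0, hxA⟩⟩⟩
      rintro ⟨a, haB, haA⟩ ⟨b, hbB, hbA⟩
      obtain ⟨wk⟩ := (hBc w).preconnected ⟨a, haB⟩ ⟨b, hbB⟩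
      exact surgery hne hGA hxA hpA wk.length ⟨a, haB⟩ ⟨b, hbB⟩ wk le_rfl haA hbA
    · rw [Function.update_of_ne hw]
      have hnotboth : ¬(x ∈ B w ∧ p ∈ B w) := by
        rintro ⟨hx', _⟩
        exact (hBd hw).ne_of_mem hx' hx0 rfl
      rw [← induce_sup_eq hne hnotboth]
      exact hBc w
  · intro w1 w2 hww
    by_cases h1 : w1 = w0
    · subst h1
      rw [Function.update_self, Function.update_of_ne (Ne.symm hww)]
      exact Set.disjoint_of_subset_left Set.inter_subset_left (hBd hww)
    · by_cases h2 : w2 = w0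
      · subst h2
        rw [Function.update_of_ne h1, Function.update_self]
        exact Set.disjoint_of_subset_right Set.inter_subset_left (hBd hww)
      · rw [Function.update_of_ne h1, Function.update_of_ne h2]
        exact hBd hww
  · intro w1 w2 hadj
    obtain ⟨u, huB, v, hvB, huv⟩ := hBe hadj
    have hne12 : w1 ≠ w2 := hadj.ne
    by_cases h1 : w1 = w0
    · subst h1
      have h2 : w2 ≠ w1 := hne12.symm
      rcases (adj_sup_iff hne).mp huv with hG | ⟨hux, hvp⟩ | ⟨hup, hvx⟩
      · have hvA : v ∈ A := hside w2 h2 hvB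
        have huA : u ∈ A := (hGA hG).mpr hvA
        exact ⟨u, by rw [Function.update_self]; exact ⟨huB, huA⟩,
               v, by rw [Function.update_of_ne h2]; exact hvB, hG⟩
      · exact ((hBd h2).ne_of_mem (hvp ▸ hvB) hp0 rfl).elim
      · exact ((hBd h2).ne_of_mem (hvx ▸ hvB) hx0 rfl).elim
    · by_cases h2 : w2 = w0
      · subst h2
        rcases (adj_sup_iff hne).mp huv with hG | ⟨hux, hvp⟩ | ⟨hup, hvx⟩
        · have huA : u ∈ A := hside w1 h1 huB
          have hvA : v ∈ A := (hGA hG).mp huA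
          exact ⟨u, by rw [Function.update_of_ne h1]; exact huB,
                 v, by rw [Function.update_self]; exact ⟨hvB, hvA⟩, hG⟩
        · exact ((hBd h1).ne_of_mem (hux ▸ huB) hx0 rfl).elim
        · exact ((hBd h1).ne_of_mem (hup ▸ huB) hp0 rfl).elim
      · rcases (adj_sup_iff hne).mp huv with hG | ⟨hux, hvp⟩ | ⟨hup, hvx⟩
        · exact ⟨u, by rw [Function.update_of_ne h1]; exact huB,
                 v, by rw [Function.update_of_ne h2]; exact hvB, hG⟩
        · exact ((hBd h1).ne_of_mem (hux ▸ huB) hx0 rfl).elim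
        · exact ((hBd h1).ne_of_mem (hup ▸ huB) hp0 rfl).elim
end Transfer

section Main
variable {V : Type*} {G : SimpleGraph V} {x p : V}

lemma minor_of_bridge {W : Type*} {H : SimpleGraph W}
    (hxp : ¬ G.Reachable x p)
    (hW : ∀ w0 : W, ∃ w1, w1 ≠ w0)
    (hHc : ∀ a b : W, Relation.ReflTransGen H.Adj a b)
    (h2e : ∀ a b : W, H.Adj a b →
      Relation.ReflTransGen (fun c d => H.Adj c d ∧ s(c,d) ≠ s(a,b)) a b)
    (hdel : ∀ w0 a b : W, a ≠ w0 → b ≠ w0 →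
      Relation.ReflTransGen (fun c d => H.Adj c d ∧ c ≠ w0 ∧ d ≠ w0) a b)
    (hm : H.IsMinorOf (G ⊔ fromEdgeSet {s(x,p)})) : H.IsMinorOf G := by
  classical
  have hne : x ≠ p := fun h => hxp (h ▸ Reachable.refl x)
  set A : Set V := {v | G.Reachable x v} with hA
  have hGA : ∀ ⦃u v : V⦄, G.Adj u v → (u ∈ A ↔ v ∈ A) :=
    fun u v h => ⟨fun r => r.trans h.reachable, fun r => r.trans h.symm.reachable⟩
  have hGA' : ∀ ⦃u v : V⦄, G.Adj u v → (u ∈ Aᶜ ↔ v ∈ Aᶜ) :=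
    fun u v h => not_iff_not.mpr (hGA h)
  have hxA : x ∈ A := Reachable.refl x
  have hpA : p ∉ A := hxp
  obtain ⟨B, hBc, hBd, hBe⟩ := hm
  have hBD : MinorData H (G ⊔ fromEdgeSet {s(x,p)}) B := ⟨hBc, hBd, hBe⟩
  -- nonemptiness of branch sets
  have hBne : ∀ w, (B w).Nonempty := by
    intro w
    obtain ⟨⟨a, ha⟩⟩ := (hBc w).nonempty
    exact ⟨a, ha⟩
  by_cases hw0 : ∃ w0, x ∈ B w0 ∧ p ∈ B w0
  · -- Case 1
    obtain ⟨w0, hx0, hp0⟩ := hw0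
    have hxpnot : ∀ w, w ≠ w0 → x ∉ B w ∧ p ∉ B w := by
      intro w hw
      exact ⟨fun h => (hBd hw).ne_of_mem h hx0 rfl, fun h => (hBd hw).ne_of_mem h hp0 rfl⟩
    have hGconn : ∀ w, w ≠ w0 → (G.induce (B w)).Connected := by
      intro w hw
      rw [← induce_sup_eq hne (fun h => (hxpnot w hw).1 h.1)]
      exact hBc w
    -- edges not touching w0 have G-witnesses
    have hGwit : ∀ ⦃c d : W⦄, H.Adj c d → c ≠ w0 → d ≠ w0 →
        ∃ u ∈ B c, ∃ v ∈ B d, G.Adj u v := by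
      intro c d hcd hc hd
      obtain ⟨u, hu, v, hv, huv⟩ := hBe hcd
      rcases (adj_sup_iff hne).mp huv with hG | ⟨hux, hvp⟩ | ⟨hup, hvx⟩
      · exact ⟨u, hu, v, hv, hG⟩
      · exact absurd (hux ▸ hu) (hxpnot c hc).1
      · exact absurd (hup ▸ hu) (hxpnot c hc).2
    -- side propagation along chains avoiding w0
    have chain_side : ∀ (A' : Set V), (∀ ⦃u v : V⦄, G.Adj u v → (u ∈ A' ↔ v ∈ A')) →
        ∀ a b : W, B a ⊆ A' →
        Relation.ReflTransGen (fun c d => H.Adj c d ∧ c ≠ w0 ∧ d ≠ w0) a b → B b ⊆ A' := by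
      intro A' hGA'' a b haA hchain
      induction hchain with
      | refl => exact haA
      | tail _ hstep ih =>
        obtain ⟨hadj, hcne, hdne⟩ := hstep
        obtain ⟨u, hu, v, hv, huv⟩ := hGwit hadj hcne hdne
        exact induced_side hGA'' (hGconn _ hdne) hv ((hGA'' huv).mp (ih hu))
    obtain ⟨w1, hw1⟩ := hW w0
    by_cases hS : B w1 ⊆ A
    · have hside : ∀ w, w ≠ w0 → B w ⊆ A := fun w hw =>
        chain_side A hGA w1 w hS (hdel w0 w1 w hw1 hw)
      obtain ⟨B', hB'⟩ := case1_aux hne hGA hxA hpA hBD w0 hx0 hp0 hside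
      exact ⟨B', hB'⟩
    · have hw1c : B w1 ⊆ Aᶜ := by
        obtain ⟨a, ha⟩ := hBne w1
        by_cases haA : a ∈ A
        · exact absurd (induced_side hGA (hGconn w1 hw1) ha haA) hS
        · exact induced_side hGA' (hGconn w1 hw1) ha haA
      have hside : ∀ w, w ≠ w0 → B w ⊆ Aᶜ := fun w hw =>
        chain_side Aᶜ hGA' w1 w hw1c (hdel w0 w1 w hw1 hw)
      have hswap : (fromEdgeSet {s(p,x)} : SimpleGraph V) = fromEdgeSet {s(x,p)} := by
        rw [Sym2.eq_swap]
      have hBD' : MinorData H (G ⊔ fromEdgeSet {s(p,x)}) B := by rw [hswap]; exact hBD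
      obtain ⟨B', hB'⟩ := case1_aux hne.symm hGA' (show p ∈ Aᶜ from hpA)
        (show x ∉ Aᶜ from not_not_intro hxA) hBD' w0 hp0 hx0 hside
      exact ⟨B', hB'⟩
  · have hGconn : ∀ w, (G.induce (B w)).Connected := fun w => by
      rw [← induce_sup_eq hne (fun h => hw0 ⟨w, h⟩)]; exact hBc w
    by_cases hxw : ∃ w1, x ∈ B w1
    · by_cases hpw : ∃ w2, p ∈ B w2
      · obtain ⟨w1, hxw1⟩ := hxw
        obtain ⟨w2, hpw2⟩ := hpw
        exfalso
        have hs1 : B w1 ⊆ A := induced_side hGA (hGconn w1) hxw1 hxA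
        have step : ∀ ⦃c d : W⦄, H.Adj c d → s(c,d) ≠ s(w1,w2) → B c ⊆ A → B d ⊆ A := by
          intro c d hcd hsne hcA
          obtain ⟨u, hu, v, hv, huv⟩ := hBe hcd
          rcases (adj_sup_iff hne).mp huv with hG | ⟨hux, hvp⟩ | ⟨hup, hvx⟩
          · exact induced_side hGA (hGconn d) hv ((hGA hG).mp (hcA hu))
          · have hc : c = w1 := by
              by_contra hcc
              exact (hBd hcc).ne_of_mem (hux ▸ hu) hxw1 rfl
            have hd : d = w2 := by
              by_contra hdd
              exact (hBd hdd).ne_of_mem (hvp ▸ hv) hpw2 rfl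
            exact absurd (by rw [hc, hd]) hsne
          · have hc : c = w2 := by
              by_contra hcc
              exact (hBd hcc).ne_of_mem (hup ▸ hu) hpw2 rfl
            have hd : d = w1 := by
              by_contra hdd
              exact (hBd hdd).ne_of_mem (hvx ▸ hv) hxw1 rfl
            exact absurd (by rw [hc, hd, Sym2.eq_swap]) hsne
        by_cases hadj : H.Adj w1 w2
        · have hprop : ∀ b, Relation.ReflTransGen
              (fun c d => H.Adj c d ∧ s(c,d) ≠ s(w1,w2)) w1 b → B b ⊆ A := by
            intro b hch
            induction hch with
            | refl => exact hs1
            | tail _ hstep ih => exact step hstep.1 hstep.2 ih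
          exact hpA (hprop w2 (h2e w1 w2 hadj) hpw2)
        · have hprop : ∀ b, Relation.ReflTransGen H.Adj w1 b → B b ⊆ A := by
            intro b hch
            induction hch with
            | refl => exact hs1
            | tail _ hstep ih =>
              refine step hstep ?_ ih
              intro hs
              rcases Sym2.eq_iff.mp hs with ⟨h1, h2⟩ | ⟨h1, h2⟩
              · exact hadj (by rw [← h1, ← h2]; exact hstep)
              · exact hadj (by rw [← h2, ← h1]; exact hstep.symm)
          exact hpA (hprop w2 (hHc w1 w2) hpw2)
      · refine ⟨B, hGconn, hBd, ?_⟩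
        intro c d hcd
        obtain ⟨u, hu, v, hv, huv⟩ := hBe hcd
        rcases (adj_sup_iff hne).mp huv with hG | ⟨hux, hvp⟩ | ⟨hup, hvx⟩
        · exact ⟨u, hu, v, hv, hG⟩
        · exact absurd ⟨d, hvp ▸ hv⟩ hpw
        · exact absurd ⟨c, hup ▸ hu⟩ hpw
    · refine ⟨B, hGconn, hBd, ?_⟩
      intro c d hcd
      obtain ⟨u, hu, v, hv, huv⟩ := hBe hcd
      rcases (adj_sup_iff hne).mp huv with hG | ⟨hux, hvp⟩ | ⟨hup, hvx⟩
      · exact ⟨u, hu, v, hv, hG⟩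
      · exact absurd ⟨c, hux ▸ hu⟩ hxw
      · exact absurd ⟨d, hvx ▸ hv⟩ hxw
end Main

section ConcreteGraphs

lemma k4_hW : ∀ w0 : Fin 4, ∃ w1, w1 ≠ w0 := by decide

lemma k4_adj {a b : Fin 4} (h : a ≠ b) : (completeGraph (Fin 4)).Adj a b := h

lemma k4_hHc : ∀ a b : Fin 4, Relation.ReflTransGen (completeGraph (Fin 4)).Adj a b := by
  intro a b
  rcases eq_or_ne a b with rfl | h
  · exact Relation.ReflTransGen.refl
  · exact Relation.ReflTransGen.single (k4_adj h)

lemma k4_h2e : ∀ a b : Fin 4, (completeGraph (Fin 4)).Adj a b →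
    Relation.ReflTransGen
      (fun c d => (completeGraph (Fin 4)).Adj c d ∧ s(c,d) ≠ s(a,b)) a b := by
  intro a b hab
  have hab' : a ≠ b := hab
  have hex : ∀ a b : Fin 4, ∃ c, c ≠ a ∧ c ≠ b := by decide
  obtain ⟨c, hca, hcb⟩ := hex a b
  have e1 : s(a,c) ≠ s(a,b) := by
    rw [Ne, Sym2.eq_iff]
    rintro (⟨-, h2⟩ | ⟨h1, -⟩)
    · exact hcb h2
    · exact hab' h1
  have e2 : s(c,b) ≠ s(a,b) := by
    rw [Ne, Sym2.eq_iff]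
    rintro (⟨h1, -⟩ | ⟨-, h2⟩)
    · exact hca h1
    · exact hab' h2.symm
  exact Relation.ReflTransGen.tail
    (Relation.ReflTransGen.single ⟨k4_adj (Ne.symm hca), e1⟩) ⟨k4_adj hcb, e2⟩

lemma k4_hdel : ∀ w0 a b : Fin 4, a ≠ w0 → b ≠ w0 →
    Relation.ReflTransGen
      (fun c d => (completeGraph (Fin 4)).Adj c d ∧ c ≠ w0 ∧ d ≠ w0) a b := by
  intro w0 a b ha hb
  rcases eq_or_ne a b with rfl | h
  · exact Relation.ReflTransGen.refl
  · exact Relation.ReflTransGen.single ⟨k4_adj h, ha, hb⟩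

abbrev K23 := completeBipartiteGraph (Fin 2) (Fin 3)

lemma k23_adj (i : Fin 2) (j : Fin 3) : K23.Adj (Sum.inl i) (Sum.inr j) := by
  simp [completeBipartiteGraph]

lemma k23_hW : ∀ w0 : Fin 2 ⊕ Fin 3, ∃ w1, w1 ≠ w0 := by decide

lemma k23_hHc : ∀ a b : Fin 2 ⊕ Fin 3, Relation.ReflTransGen K23.Adj a b := by
  rintro (i | i) (j | j)
  · rcases eq_or_ne i j with rfl | h
    · exact Relation.ReflTransGen.refl
    · exact Relation.ReflTransGen.tail
        (Relation.ReflTransGen.single (k23_adj i 0)) (k23_adj j 0).symm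
  · exact Relation.ReflTransGen.single (k23_adj i j)
  · exact Relation.ReflTransGen.single (k23_adj j i).symm
  · rcases eq_or_ne i j with rfl | h
    · exact Relation.ReflTransGen.refl
    · exact Relation.ReflTransGen.tail
        (Relation.ReflTransGen.single (k23_adj 0 i).symm) (k23_adj 0 j)

lemma k23_h2e : ∀ a b : Fin 2 ⊕ Fin 3, K23.Adj a b →
    Relation.ReflTransGen (fun c d => K23.Adj c d ∧ s(c,d) ≠ s(a,b)) a b := by
  have key : ∀ (i : Fin 2) (j : Fin 3),
      Relation.ReflTransGen
        (fun c d => K23.Adj c d ∧ s(c,d) ≠ s(Sum.inl i, Sum.inr j))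
        (Sum.inl i) (Sum.inr j) := by
    intro i j
    obtain ⟨i', hi'⟩ : ∃ i' : Fin 2, i' ≠ i := by revert i; decide
    obtain ⟨j', hj'⟩ : ∃ j' : Fin 3, j' ≠ j := by revert j; decide
    have e1 : s(Sum.inl i, Sum.inr j') ≠ s(Sum.inl i, Sum.inr j) := by
      rw [Ne, Sym2.eq_iff]
      rintro (⟨-, h2⟩ | ⟨h1, -⟩)
      · exact hj' (Sum.inr_injective h2)
      · exact absurd h1 (by simp)
    have e2 : s(Sum.inr j', Sum.inl i') ≠ s(Sum.inl i, Sum.inr j) := by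
      rw [Ne, Sym2.eq_iff]
      rintro (⟨h1, -⟩ | ⟨-, h2⟩)
      · exact absurd h1 (by simp)
      · exact hi' (Sum.inl_injective h2)
    have e3 : s(Sum.inl i', Sum.inr j) ≠ s(Sum.inl i, Sum.inr j) := by
      rw [Ne, Sym2.eq_iff]
      rintro (⟨h1, -⟩ | ⟨-, h2⟩)
      · exact hi' (Sum.inl_injective h1)
      · exact absurd h2 (by simp)
    exact Relation.ReflTransGen.tail
      (Relation.ReflTransGen.tail
        (Relation.ReflTransGen.single ⟨k23_adj i j', e1⟩)
        ⟨(k23_adj i' j').symm, e2⟩)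
      ⟨k23_adj i' j, e3⟩
  have hsymm : ∀ a b : Fin 2 ⊕ Fin 3, Symmetric
      (fun c d => K23.Adj c d ∧ s(c,d) ≠ s(a,b)) := by
    intro a b c d ⟨h1, h2⟩
    exact ⟨h1.symm, by rwa [Sym2.eq_swap]⟩
  rintro (i | i) (j | j) hab
  · exact absurd hab (by simp [completeBipartiteGraph])
  · exact key i j
  · have := key j i
    rw [Sym2.eq_swap]
    haveI hSy : Std.Symm (fun c d => K23.Adj c d ∧ s(c,d) ≠ s(Sum.inl j, Sum.inr i)) :=
      ⟨fun a b h => hsymm (Sum.inl j) (Sum.inr i) h⟩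
    exact symm this
  · exact absurd hab (by simp [completeBipartiteGraph])

lemma k23_hdel : ∀ w0 a b : Fin 2 ⊕ Fin 3, a ≠ w0 → b ≠ w0 →
    Relation.ReflTransGen
      (fun c d => K23.Adj c d ∧ c ≠ w0 ∧ d ≠ w0) a b := by
  have hj' : ∀ w0 : Fin 2 ⊕ Fin 3, ∃ j : Fin 3, Sum.inr j ≠ w0 := by decide
  have hi' : ∀ w0 : Fin 2 ⊕ Fin 3, ∃ i : Fin 2, Sum.inl i ≠ w0 := by decide
  intro w0
  have hj := hj' w0
  have hi := hi' w0
  rintro (a | a) (b | b) ha hb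
  · rcases eq_or_ne a b with rfl | h
    · exact Relation.ReflTransGen.refl
    · obtain ⟨j, hjj⟩ := hj
      exact Relation.ReflTransGen.tail
        (Relation.ReflTransGen.single ⟨k23_adj a j, ha, hjj⟩)
        ⟨(k23_adj b j).symm, hjj, hb⟩
  · exact Relation.ReflTransGen.single ⟨k23_adj a b, ha, hb⟩
  · exact Relation.ReflTransGen.single ⟨(k23_adj b a).symm, ha, hb⟩
  · rcases eq_or_ne a b with rfl | h
    · exact Relation.ReflTransGen.refl
    · obtain ⟨i, hii⟩ := hi
      exact Relation.ReflTransGen.tail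
        (Relation.ReflTransGen.single ⟨(k23_adj i a).symm, ha, hii⟩)
        ⟨k23_adj i b, hii, hb⟩

end ConcreteGraphs

lemma MaximalOuterplanar.preconnected {V : Type*} {G : SimpleGraph V}
    (h : MaximalOuterplanar G) : G.Preconnected := by
  intro u v
  by_contra hr
  have hne : u ≠ v := fun h' => hr (h' ▸ Reachable.refl u)
  have hnadj : ¬ G.Adj u v := fun h' => hr h'.reachable
  have hno := h.2 u v hne hnadj
  rw [Outerplanar, not_and_or, not_not, not_not] at hno
  rcases hno with hm | hm
  · exact h.1.1 (minor_of_bridge hr k4_hW k4_hHc k4_h2e k4_hdel hm)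
  · exact h.1.2 (minor_of_bridge hr k23_hW k23_hHc k23_h2e k23_hdel hm)

section Helpers
variable {V : Type*}

lemma induce_singleton_connected (G : SimpleGraph V) (a : V) :
    (G.induce ({a} : Set V)).Connected := by
  rw [connected_iff]
  refine ⟨?_, ⟨⟨a, rfl⟩⟩⟩
  rintro ⟨u, hu⟩ ⟨v, hv⟩
  simp only [Set.mem_singleton_iff] at hu hv
  have : (⟨u, hu⟩ : ({a} : Set V)) = ⟨v, hv⟩ := Subtype.ext (hu.trans hv.symm)
  rw [this]

lemma induce_pair_connected (G : SimpleGraph V) {a b : V} (hab : G.Adj a b) :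
    (G.induce ({a, b} : Set V)).Connected := by
  rw [connected_iff]
  have ha : a ∈ ({a,b} : Set V) := by simp
  have hb : b ∈ ({a,b} : Set V) := by simp
  refine ⟨?_, ⟨⟨a, ha⟩⟩⟩
  have key : ∀ u : ({a,b} : Set V), (G.induce {a,b}).Reachable u ⟨b, hb⟩ := by
    rintro ⟨u, hu⟩
    simp only [Set.mem_insert_iff, Set.mem_singleton_iff] at hu
    rcases hu with rfl | rfl
    · exact Adj.reachable (show G.Adj u b from hab)
    · exact Reachable.refl _
  intro u v
  exact (key u).trans (key v).symm

lemma induce_triple_connected (G : SimpleGraph V) {a b c : V}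
    (hab : G.Adj a b) (hbc : G.Adj b c) :
    (G.induce ({a, b, c} : Set V)).Connected := by
  rw [connected_iff]
  have ha : a ∈ ({a,b,c} : Set V) := by simp
  have hb : b ∈ ({a,b,c} : Set V) := by simp
  refine ⟨?_, ⟨⟨a, ha⟩⟩⟩
  have key : ∀ u : ({a,b,c} : Set V), (G.induce {a,b,c}).Reachable u ⟨b, hb⟩ := by
    rintro ⟨u, hu⟩
    simp only [Set.mem_insert_iff, Set.mem_singleton_iff] at hu
    rcases hu with rfl | rfl | rfl
    · exact Adj.reachable (show G.Adj u b from hab)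
    · exact Reachable.refl _
    · exact Adj.reachable (show G.Adj u b from hbc.symm)
  intro u v
  exact (key u).trans (key v).symm

lemma k23_minor_of (G : SimpleGraph V) {x y w z : V} (T : Set V)
    (hT : (G.induce T).Connected)
    (hxy : x ≠ y) (hwz : w ≠ z) (hxw : x ≠ w) (hxz : x ≠ z) (hyw : y ≠ w) (hyz : y ≠ z)
    (hxT : x ∉ T) (hyT : y ∉ T) (hwT : w ∉ T) (hzT : z ∉ T)
    (axw : G.Adj x w) (axz : G.Adj x z) (ayw : G.Adj y w) (ayz : G.Adj y z)
    (hxT' : ∃ t ∈ T, G.Adj x t) (hyT' : ∃ t ∈ T, G.Adj y t) :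
    (completeBipartiteGraph (Fin 2) (Fin 3)).IsMinorOf G := by
  classical
  refine ⟨Sum.elim (fun i : Fin 2 => if i = 0 then {x} else {y})
      (fun j : Fin 3 => if j = 0 then {w} else if j = 1 then {z} else T), ?_, ?_, ?_⟩
  · rintro (i | j)
    · fin_cases i
      · simpa using induce_singleton_connected G x
      · simpa using induce_singleton_connected G y
    · fin_cases j
      · simpa using induce_singleton_connected G w
      · simpa using induce_singleton_connected G z
      · simpa using hT
  · rintro (i | j) (i' | j') hne <;> simp only [Sum.elim_inl, Sum.elim_inr]
    · fin_cases i <;> fin_cases i' <;>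
        simp_all [Set.disjoint_singleton_left, eq_comm]
    · fin_cases i <;> fin_cases j' <;>
        simp_all [Set.disjoint_singleton_left, Set.disjoint_singleton_right, eq_comm]
    · fin_cases j <;> fin_cases i' <;>
        simp_all [Set.disjoint_singleton_left, Set.disjoint_singleton_right, eq_comm]
    · fin_cases j <;> fin_cases j' <;>
        simp_all [Set.disjoint_singleton_left, Set.disjoint_singleton_right, eq_comm]
  · rintro (i | j) (i' | j') hadj
    · exact absurd hadj (by simp [completeBipartiteGraph])
    · obtain ⟨tx, htx, haxt⟩ := hxT'
      obtain ⟨ty, hty, hayt⟩ := hyT'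
      fin_cases i <;> fin_cases j' <;>
        simp only [Sum.elim_inl, Sum.elim_inr, if_pos, if_neg, Fin.isValue] <;> norm_num
      · exact axw
      · exact axz
      · exact ⟨tx, htx, haxt⟩
      · exact ayw
      · exact ayz
      · exact ⟨ty, hty, hayt⟩
    · obtain ⟨tx, htx, haxt⟩ := hxT'
      obtain ⟨ty, hty, hayt⟩ := hyT'
      fin_cases j <;> fin_cases i' <;>
        simp only [Sum.elim_inl, Sum.elim_inr, if_pos, if_neg, Fin.isValue] <;> norm_num
      · exact axw.symm
      · exact ayw.symm
      · exact axz.symm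
      · exact ayz.symm
      · exact ⟨tx, htx, haxt.symm⟩
      · exact ⟨ty, hty, hayt.symm⟩
    · exact absurd hadj (by simp [completeBipartiteGraph])
end Helpers

set_option maxHeartbeats 2000000 in
/-- interior edge `xy` with common neighbors `w ≠ z`, where
`δ_xw = 0`, `δ_xz = 1`, `δ_yw = 1`, `δ_yz = 0`. -/
theorem interior_config_13 {V : Type*} [Fintype V]
    (G : SimpleGraph V) [DecidableRel G.Adj]
    (hmax : MaximalOuterplanar G)
    (x y w z : V) (hxy : G.Adj x y) (hd : G.degree x ≤ G.degree y)
    (hwz : w ≠ z)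
    (hcom : G.neighborSet x ∩ G.neighborSet y = {w, z})
    (hxw : ((G.neighborSet x ∩ G.neighborSet w) \ {y}).ncard = 0)
    (hxz : ((G.neighborSet x ∩ G.neighborSet z) \ {y}).ncard = 1)
    (hyw : ((G.neighborSet y ∩ G.neighborSet w) \ {x}).ncard = 1)
    (hyz : ((G.neighborSet y ∩ G.neighborSet z) \ {x}).ncard = 0) :
    (G.degree y < 2 * G.degree x →
      llyCurv G x y = 5 / (G.degree x : ℝ) + 5 / (G.degree y : ℝ) - 2) ∧
    (2 * G.degree x ≤ G.degree y →
      llyCurv G x y = 4 / (G.degree x : ℝ) + 7 / (G.degree y : ℝ) - 2) := by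
  classical
  obtain ⟨houter, hmax2⟩ := hmax
  -- basic adjacencies
  have hmemw : w ∈ G.neighborSet x ∩ G.neighborSet y := by
    rw [hcom]; exact Set.mem_insert _ _
  have hmemz : z ∈ G.neighborSet x ∩ G.neighborSet y := by
    rw [hcom]; exact Set.mem_insert_of_mem _ rfl
  have axw : G.Adj x w := hmemw.1
  have ayw : G.Adj y w := hmemw.2
  have axz : G.Adj x z := hmemz.1
  have ayz : G.Adj y z := hmemz.2
  have hcomm : ∀ {q : V}, G.Adj x q → G.Adj y q → q = w ∨ q = z := by
    intro q h1 h2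
    have hq : q ∈ G.neighborSet x ∩ G.neighborSet y := ⟨h1, h2⟩
    rw [hcom] at hq
    simpa using hq
  have hxw0 : ∀ q : V, G.Adj x q → G.Adj w q → q ≠ y → False := by
    intro q h1 h2 h3
    have h4 : ((G.neighborSet x ∩ G.neighborSet w) \ {y}) = ∅ :=
      (Set.ncard_eq_zero (Set.toFinite _)).mp hxw
    have : q ∈ ((G.neighborSet x ∩ G.neighborSet w) \ {y}) := ⟨⟨h1, h2⟩, h3⟩
    rw [h4] at this; exact this
  have hyz0 : ∀ q : V, G.Adj y q → G.Adj z q → q ≠ x → False := by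
    intro q h1 h2 h3
    have h4 : ((G.neighborSet y ∩ G.neighborSet z) \ {x}) = ∅ :=
      (Set.ncard_eq_zero (Set.toFinite _)).mp hyz
    have : q ∈ ((G.neighborSet y ∩ G.neighborSet z) \ {x}) := ⟨⟨h1, h2⟩, h3⟩
    rw [h4] at this; exact this
  obtain ⟨u1, hu1set⟩ := Set.ncard_eq_one.mp hxz
  obtain ⟨v1, hv1set⟩ := Set.ncard_eq_one.mp hyw
  have hu1mem : u1 ∈ ((G.neighborSet x ∩ G.neighborSet z) \ {y}) := by
    rw [hu1set]; rfl
  have hv1mem : v1 ∈ ((G.neighborSet y ∩ G.neighborSet w) \ {x}) := by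
    rw [hv1set]; rfl
  have axu1 : G.Adj x u1 := hu1mem.1.1
  have azu1 : G.Adj z u1 := hu1mem.1.2
  have hu1y : u1 ≠ y := hu1mem.2
  have ayv1 : G.Adj y v1 := hv1mem.1.1
  have awv1 : G.Adj w v1 := hv1mem.1.2
  have hv1x : v1 ≠ x := hv1mem.2
  -- distinctness
  have hxy' : x ≠ y := hxy.ne
  have hwx : w ≠ x := axw.ne'
  have hwy : w ≠ y := ayw.ne'
  have hzx : z ≠ x := axz.ne'
  have hzy : z ≠ y := ayz.ne'
  have hu1x : u1 ≠ x := axu1.ne'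
  have hu1z : u1 ≠ z := azu1.ne'
  have hu1w : u1 ≠ w := by
    intro h
    exact hxw0 z axz (h ▸ azu1).symm (by exact hzy)
  have hv1y : v1 ≠ y := ayv1.ne'
  have hv1w : v1 ≠ w := awv1.ne'
  have hv1z : v1 ≠ z := by
    intro h
    exact hyz0 w ayw (h ▸ awv1).symm (by exact hwx)
  have hu1v1 : u1 ≠ v1 := by
    intro h
    rcases hcomm axu1 (h ▸ ayv1) with h' | h'
    · exact hu1w h'
    · exact hu1z h'
  have hv1nx : ¬ G.Adj x v1 := by
    intro h
    rcases hcomm h ayv1 with h' | h'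
    · exact hv1w h'
    · exact hv1z h'
  -- connectivity
  have hpre : G.Preconnected := MaximalOuterplanar.preconnected ⟨houter, hmax2⟩
  have hconn : G.Connected := by
    rw [connected_iff]
    exact ⟨hpre, ⟨x⟩⟩
  -- distance helpers
  have hdistpos : ∀ {a b : V}, a ≠ b → 1 ≤ G.dist a b := by
    intro a b h
    exact hconn.pos_dist_of_ne h
  have hdist2 : ∀ {a b : V}, a ≠ b → ¬ G.Adj a b → 2 ≤ G.dist a b := by
    intro a b h1 h2
    have hp := hdistpos h1
    have h3 : G.dist a b ≠ 1 := fun h => h2 ((dist_eq_one_iff_adj).mp h)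
    omega
  have hdist3 : ∀ {a b : V}, a ≠ b → ¬ G.Adj a b →
      (∀ q, ¬(G.Adj a q ∧ G.Adj q b)) → 3 ≤ G.dist a b := by
    intro a b h1 h2 h3
    have h2' := hdist2 h1 h2
    rcases Nat.lt_or_ge (G.dist a b) 3 with hlt | hge
    · exfalso
      have hdd : G.dist a b = 2 := by omega
      obtain ⟨wk, hwk⟩ := hconn.exists_walk_length_eq_dist a b
      rw [hdd] at hwk
      cases wk with
      | nil => simp at hwk
      | cons h q =>
        cases q with
        | nil => simp at hwk
        | cons h' q' =>
          cases q' with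
          | nil => exact h3 _ ⟨h, h'⟩
          | cons h'' q'' => simp [SimpleGraph.Walk.length_cons] at hwk
    · exact hge
  -- dist upper bound for neighbors of y
  have hdisty2 : ∀ {v' : V}, G.Adj y v' → G.dist v' x ≤ 2 := by
    intro v' h
    calc G.dist v' x ≤ G.dist v' y + G.dist y x := hconn.dist_triangle
    _ ≤ 2 := by
        rw [dist_eq_one_iff_adj.mpr h.symm, dist_eq_one_iff_adj.mpr hxy.symm]
  -- the key K2,3-based distance fact
  have hUV : ∀ u v' : V, G.Adj x u → u ≠ y → u ≠ w → u ≠ z →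
      G.Adj y v' → v' ≠ x → v' ≠ w → v' ≠ z → 3 ≤ G.dist u v' := by
    intro u v' axu huy huw huz ayv hvx hvw hvz
    have huv : u ≠ v' := by
      intro h
      rcases hcomm axu (h ▸ ayv) with h' | h'
      · exact huw h'
      · exact huz h'
    have hnadj : ¬ G.Adj u v' := by
      intro hadj
      refine houter.2 (k23_minor_of G ({u, v'} : Set V)
        (induce_pair_connected G hadj) hxy' hwz hwx.symm hzx.symm hwy.symm hzy.symm
        ?_ ?_ ?_ ?_ axw axz ayw ayz ⟨u, by simp, axu⟩ ⟨v', by simp, ayv⟩)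
      · simp only [Set.mem_insert_iff, Set.mem_singleton_iff]
        push_neg
        exact ⟨axu.ne, Ne.symm hvx⟩
      · simp only [Set.mem_insert_iff, Set.mem_singleton_iff]
        push_neg
        exact ⟨Ne.symm huy, ayv.ne⟩
      · simp only [Set.mem_insert_iff, Set.mem_singleton_iff]
        push_neg
        exact ⟨Ne.symm huw, Ne.symm hvw⟩
      · simp only [Set.mem_insert_iff, Set.mem_singleton_iff]
        push_neg
        exact ⟨Ne.symm huz, Ne.symm hvz⟩
    refine hdist3 huv hnadj ?_
    rintro q ⟨hq1, hq2⟩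
    have hqx : q ≠ x := by
      rintro rfl
      rcases hcomm hq2 ayv with h' | h'
      · exact hvw h'
      · exact hvz h'
    have hqy : q ≠ y := by
      rintro rfl
      rcases hcomm axu hq1.symm with h' | h'
      · exact huw h'
      · exact huz h'
    have hqw : q ≠ w := by
      rintro rfl
      exact hxw0 u axu hq1.symm huy
    have hqz : q ≠ z := by
      rintro rfl
      exact hyz0 v' ayv hq2 hvx
    refine houter.2 (k23_minor_of G ({u, q, v'} : Set V)
      (induce_triple_connected G hq1 hq2) hxy' hwz hwx.symm hzx.symm hwy.symm hzy.symm
      ?_ ?_ ?_ ?_ axw axz ayw ayz ⟨u, by simp, axu⟩ ⟨v', by simp, ayv⟩)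
    · simp only [Set.mem_insert_iff, Set.mem_singleton_iff]
      push_neg
      exact ⟨axu.ne, Ne.symm hqx, Ne.symm hvx⟩
    · simp only [Set.mem_insert_iff, Set.mem_singleton_iff]
      push_neg
      exact ⟨Ne.symm huy, Ne.symm hqy, ayv.ne⟩
    · simp only [Set.mem_insert_iff, Set.mem_singleton_iff]
      push_neg
      exact ⟨Ne.symm huw, Ne.symm hqw, Ne.symm hvw⟩
    · simp only [Set.mem_insert_iff, Set.mem_singleton_iff]
      push_neg
      exact ⟨Ne.symm huz, Ne.symm hqz, Ne.symm hvz⟩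
  -- degree bounds
  have hTx : ({y, w, z, u1} : Finset V) ⊆ G.neighborFinset x := by
    intro q hq
    simp only [Finset.mem_insert, Finset.mem_singleton] at hq
    rw [mem_neighborFinset]
    rcases hq with rfl | rfl | rfl | rfl
    · exact hxy
    · exact axw
    · exact axz
    · exact axu1
  have hTy : ({x, w, z, v1} : Finset V) ⊆ G.neighborFinset y := by
    intro q hq
    simp only [Finset.mem_insert, Finset.mem_singleton] at hq
    rw [mem_neighborFinset]
    rcases hq with rfl | rfl | rfl | rfl
    · exact hxy.symm
    · exact ayw
    · exact ayz
    · exact ayv1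
  have hTxcard : ({y, w, z, u1} : Finset V).card = 4 := by
    rw [Finset.card_insert_of_notMem (by
        simp only [Finset.mem_insert, Finset.mem_singleton]
        push_neg
        exact ⟨hwy.symm, hzy.symm, hu1y.symm⟩),
      Finset.card_insert_of_notMem (by
        simp only [Finset.mem_insert, Finset.mem_singleton]
        push_neg
        exact ⟨hwz, hu1w.symm⟩),
      Finset.card_insert_of_notMem (by
        simp only [Finset.mem_singleton]
        exact hu1z.symm),
      Finset.card_singleton]
  have hTycard : ({x, w, z, v1} : Finset V).card = 4 := by
    rw [Finset.card_insert_of_notMem (by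
        simp only [Finset.mem_insert, Finset.mem_singleton]
        push_neg
        exact ⟨hwx.symm, hzx.symm, hv1x.symm⟩),
      Finset.card_insert_of_notMem (by
        simp only [Finset.mem_insert, Finset.mem_singleton]
        push_neg
        exact ⟨hwz, hv1w.symm⟩),
      Finset.card_insert_of_notMem (by
        simp only [Finset.mem_singleton]
        exact hv1z.symm),
      Finset.card_singleton]
  have hdx4 : 4 ≤ G.degree x := by
    rw [← card_neighborFinset_eq_degree]
    exact hTxcard ▸ Finset.card_le_card hTx
  have hdy4 : 4 ≤ G.degree y := by
    rw [← card_neighborFinset_eq_degree]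
    exact hTycard ▸ Finset.card_le_card hTy
  have hdxcard : (G.neighborFinset x).card = G.degree x := card_neighborFinset_eq_degree _ _
  have hdycard : (G.neighborFinset y).card = G.degree y := card_neighborFinset_eq_degree _ _
  have hdx0 : (0:ℝ) < (G.degree x : ℝ) := by
    have : (0:ℕ) < G.degree x := by omega
    exact_mod_cast this
  have hdy0 : (0:ℝ) < (G.degree y : ℝ) := by
    have : (0:ℕ) < G.degree y := by omega
    exact_mod_cast this
  set Curv : Set ℝ := {r : ℝ | ∃ f : V → ℤ,
      (∀ u v : V, |f u - f v| ≤ (G.dist u v : ℤ)) ∧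
      f y - f x = 1 ∧
      r = graphLap G f x - graphLap G f y} with hCurvDef
  have hcurv_eq : llyCurv G x y = sInf Curv := rfl
  -- lower bound
  have hlow : ∀ r ∈ Curv, ∃ a b : ℤ, 0 ≤ a ∧ a ≤ 1 ∧ 0 ≤ b ∧ b ≤ 1 ∧
      ((a:ℝ) + 2*b + 4) / (G.degree x : ℝ) + (7 - 2*(a:ℝ) - b) / (G.degree y : ℝ) - 2 ≤ r := by
    rintro r ⟨f, hLip, hfyx, rfl⟩
    have hwY := hLip w y
    rw [dist_eq_one_iff_adj.mpr ayw.symm] at hwY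
    rw [abs_le] at hwY
    have hwX := hLip w x
    rw [dist_eq_one_iff_adj.mpr axw.symm] at hwX
    rw [abs_le] at hwX
    have hzY := hLip z y
    rw [dist_eq_one_iff_adj.mpr ayz.symm] at hzY
    rw [abs_le] at hzY
    have hzX := hLip z x
    rw [dist_eq_one_iff_adj.mpr axz.symm] at hzX
    rw [abs_le] at hzX
    refine ⟨f w - f x, f z - f x, by push_cast at hwY ⊢; omega, by push_cast at hwX ⊢; omega,
      by push_cast at hzY ⊢; omega, by push_cast at hzX ⊢; omega, ?_⟩
    -- integer sum bounds
    have hu1B := hLip u1 z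
    rw [dist_eq_one_iff_adj.mpr azu1.symm, abs_le] at hu1B
    have hv1B := hLip v1 w
    rw [dist_eq_one_iff_adj.mpr awv1.symm, abs_le] at hv1B
    have hsx : (f w - f x) + 2*(f z - f x) + 4 - (G.degree x : ℤ)
        ≤ ∑ u ∈ G.neighborFinset x, (f u - f x) := by
      rw [← Finset.sum_sdiff hTx]
      have hsum1 : ∑ u ∈ ({y,w,z,u1} : Finset V), (f u - f x)
          = (f y - f x) + ((f w - f x) + ((f z - f x) + (f u1 - f x))) := by
        rw [Finset.sum_insert (by
            simp only [Finset.mem_insert, Finset.mem_singleton]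
            push_neg
            exact ⟨hwy.symm, hzy.symm, hu1y.symm⟩),
          Finset.sum_insert (by
            simp only [Finset.mem_insert, Finset.mem_singleton]
            push_neg
            exact ⟨hwz, hu1w.symm⟩),
          Finset.sum_insert (by
            simp only [Finset.mem_singleton]
            exact hu1z.symm),
          Finset.sum_singleton]
      have hsum2 : ((G.neighborFinset x \ ({y,w,z,u1} : Finset V)).card : ℤ) * (-1)
          ≤ ∑ u ∈ G.neighborFinset x \ ({y,w,z,u1} : Finset V), (f u - f x) := by
        rw [← nsmul_eq_mul]
        apply Finset.card_nsmul_le_sum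
        intro u hu
        have hu' : u ∈ G.neighborFinset x := (Finset.mem_sdiff.mp hu).1
        have := hLip u x
        rw [dist_eq_one_iff_adj.mpr ((mem_neighborFinset _ _ _).mp hu').symm, abs_le] at this
        push_cast at this ⊢
        omega
      have hcard : (G.neighborFinset x \ ({y,w,z,u1} : Finset V)).card
          = G.degree x - 4 := by
        rw [Finset.card_sdiff_of_subset hTx, hTxcard, hdxcard]
      have h4 : ((G.degree x - 4 : ℕ) : ℤ) = (G.degree x : ℤ) - 4 := by omega
      rw [hcard, h4] at hsum2
      rw [hsum1]
      push_cast at hu1B ⊢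
      omega
    have hsy : ∑ v ∈ G.neighborFinset y, (f v - f y)
        ≤ 2*(f w - f x) + (f z - f x) + (G.degree y : ℤ) - 7 := by
      rw [← Finset.sum_sdiff hTy]
      have hsum1 : ∑ v ∈ ({x,w,z,v1} : Finset V), (f v - f y)
          = (f x - f y) + ((f w - f y) + ((f z - f y) + (f v1 - f y))) := by
        rw [Finset.sum_insert (by
            simp only [Finset.mem_insert, Finset.mem_singleton]
            push_neg
            exact ⟨hwx.symm, hzx.symm, hv1x.symm⟩),
          Finset.sum_insert (by
            simp only [Finset.mem_insert, Finset.mem_singleton]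
            push_neg
            exact ⟨hwz, hv1w.symm⟩),
          Finset.sum_insert (by
            simp only [Finset.mem_singleton]
            exact hv1z.symm),
          Finset.sum_singleton]
      have hsum2 : ∑ v ∈ G.neighborFinset y \ ({x,w,z,v1} : Finset V), (f v - f y)
          ≤ ((G.neighborFinset y \ ({x,w,z,v1} : Finset V)).card : ℤ) * 1 := by
        rw [← nsmul_eq_mul]
        apply Finset.sum_le_card_nsmul
        intro v hv
        have hv' : v ∈ G.neighborFinset y := (Finset.mem_sdiff.mp hv).1
        have h1 := hLip v x
        have h2 : G.dist v x ≤ 2 := hdisty2 ((mem_neighborFinset _ _ _).mp hv')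
        rw [abs_le] at h1
        have h3 : (G.dist v x : ℤ) ≤ 2 := by exact_mod_cast h2
        omega
      have hcard : (G.neighborFinset y \ ({x,w,z,v1} : Finset V)).card
          = G.degree y - 4 := by
        rw [Finset.card_sdiff_of_subset hTy, hTycard, hdycard]
      have h4 : ((G.degree y - 4 : ℕ) : ℤ) = (G.degree y : ℤ) - 4 := by omega
      rw [hcard, h4] at hsum2
      rw [hsum1]
      push_cast at hv1B ⊢
      omega
    -- pass to the reals
    rw [graphLap, graphLap]
    have hcastx : ((∑ u ∈ G.neighborFinset x, (f u - f x) : ℤ) : ℝ)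
        = ∑ u ∈ G.neighborFinset x, ((f u : ℝ) - (f x : ℝ)) := by
      push_cast
      rfl
    have hcasty : ((∑ v ∈ G.neighborFinset y, (f v - f y) : ℤ) : ℝ)
        = ∑ v ∈ G.neighborFinset y, ((f v : ℝ) - (f y : ℝ)) := by
      push_cast
      rfl
    have hsxR : ((f w : ℝ) - f x) + 2*((f z : ℝ) - f x) + 4 - (G.degree x : ℝ)
        ≤ ∑ u ∈ G.neighborFinset x, ((f u : ℝ) - (f x : ℝ)) := by
      rw [← hcastx]
      exact_mod_cast hsx
    have hsyR : ∑ v ∈ G.neighborFinset y, ((f v : ℝ) - (f y : ℝ))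
        ≤ 2*((f w : ℝ) - f x) + ((f z : ℝ) - f x) + (G.degree y : ℝ) - 7 := by
      rw [← hcasty]
      exact_mod_cast hsy
    have t1 : (((f w : ℝ) - f x) + 2*((f z : ℝ) - f x) + 4 - (G.degree x : ℝ)) / (G.degree x : ℝ)
        ≤ (∑ u ∈ G.neighborFinset x, ((f u : ℝ) - (f x : ℝ))) / (G.degree x : ℝ) := by
      gcongr
    have t2 : (∑ v ∈ G.neighborFinset y, ((f v : ℝ) - (f y : ℝ))) / (G.degree y : ℝ)
        ≤ (2*((f w : ℝ) - f x) + ((f z : ℝ) - f x) + (G.degree y : ℝ) - 7) / (G.degree y : ℝ) := by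
      gcongr
    have e1 : (((f w : ℝ) - f x) + 2*((f z : ℝ) - f x) + 4 - (G.degree x : ℝ)) / (G.degree x : ℝ)
        - (2*((f w : ℝ) - f x) + ((f z : ℝ) - f x) + (G.degree y : ℝ) - 7) / (G.degree y : ℝ)
        = (((f w : ℝ) - f x) + 2*((f z : ℝ) - f x) + 4) / (G.degree x : ℝ)
          + (7 - 2*((f w : ℝ) - f x) - ((f z : ℝ) - f x)) / (G.degree y : ℝ) - 2 := by
      field_simp
      ring
    push_cast
    linarith [t1, t2]
  -- upper bound: explicit Lipschitz functions from McShane extension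
  have hupper : ∀ cw : ℤ, 0 ≤ cw → cw ≤ 1 →
      ((cw : ℝ) + 4) / (G.degree x : ℝ) + (7 - 2*(cw:ℝ)) / (G.degree y : ℝ) - 2 ∈ Curv := by
    intro cw hcw0 hcw1
    set cf : V → ℤ := fun s =>
      if s = x then 0 else if s = y then 1 else if s = w then cw else if s = z then 0
      else if s = v1 then cw + 1 else if G.Adj x s then -1 else 2 with hcf
    have cfx : cf x = 0 := by simp [hcf]
    have cfy : cf y = 1 := by simp [hcf, Ne.symm hxy']
    have cfw : cf w = cw := by simp [hcf, hwx, hwy]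
    have cfz : cf z = 0 := by simp [hcf, hzx, hzy, Ne.symm hwz]
    have cfv1 : cf v1 = cw + 1 := by simp [hcf, hv1x, hv1y, hv1w, hv1z]
    have cfU : ∀ s, G.Adj x s → s ≠ y → s ≠ w → s ≠ z → cf s = -1 := by
      intro s h1 h2 h3 h4
      have h5 : s ≠ x := h1.ne'
      have h6 : s ≠ v1 := by rintro rfl; exact hv1nx h1
      simp [hcf, h5, h2, h3, h4, h6, h1]
    have cfD : ∀ s, G.Adj y s → s ≠ x → s ≠ w → s ≠ z → s ≠ v1 → cf s = 2 := by
      intro s h1 h2 h3 h4 h5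
      have h6 : s ≠ y := h1.ne'
      have h7 : ¬ G.Adj x s := by
        intro h
        rcases hcomm h h1 with rfl | rfl
        · exact h3 rfl
        · exact h4 rfl
      simp [hcf, h2, h6, h3, h4, h5, h7]
    set S : Finset V := insert x (insert y (G.neighborFinset x ∪ G.neighborFinset y))
      with hSdef
    have hSx : x ∈ S := by simp [hSdef]
    have hSy : y ∈ S := by simp [hSdef]
    have hSnx : ∀ s, G.Adj x s → s ∈ S := by
      intro s h
      simp only [hSdef, Finset.mem_insert, Finset.mem_union, mem_neighborFinset]
      exact Or.inr (Or.inr (Or.inl h))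
    have hSny : ∀ s, G.Adj y s → s ∈ S := by
      intro s h
      simp only [hSdef, Finset.mem_insert, Finset.mem_union, mem_neighborFinset]
      exact Or.inr (Or.inr (Or.inr h))
    have hSne : S.Nonempty := ⟨x, hSx⟩
    have hclass : ∀ s ∈ S, s = x ∨ s = y ∨ s = w ∨ s = z ∨ s = v1 ∨
        (G.Adj x s ∧ s ≠ y ∧ s ≠ w ∧ s ≠ z) ∨
        (G.Adj y s ∧ s ≠ x ∧ s ≠ w ∧ s ≠ z ∧ s ≠ v1 ∧ ¬ G.Adj x s) := by
      intro s hs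
      by_cases h1 : s = x
      · exact Or.inl h1
      by_cases h2 : s = y
      · exact Or.inr (Or.inl h2)
      by_cases h3 : s = w
      · exact Or.inr (Or.inr (Or.inl h3))
      by_cases h4 : s = z
      · exact Or.inr (Or.inr (Or.inr (Or.inl h4)))
      by_cases h5 : s = v1
      · exact Or.inr (Or.inr (Or.inr (Or.inr (Or.inl h5))))
      by_cases h6 : G.Adj x s
      · exact Or.inr (Or.inr (Or.inr (Or.inr (Or.inr (Or.inl ⟨h6, h2, h3, h4⟩)))))
      have h7 : G.Adj y s := by
        simp only [hSdef, Finset.mem_insert, Finset.mem_union, mem_neighborFinset] at hs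
        rcases hs with rfl | rfl | h | h
        · exact absurd rfl h1
        · exact absurd rfl h2
        · exact absurd h h6
        · exact h
      exact Or.inr (Or.inr (Or.inr (Or.inr (Or.inr (Or.inr ⟨h7, h1, h3, h4, h5, h6⟩)))))
    have hpair : ∀ s ∈ S, ∀ t ∈ S, |cf s - cf t| ≤ (G.dist s t : ℤ) := by
      intro s hs t ht
      rcases hclass s hs with heqs | heqs | heqs | heqs | heqs |
          ⟨hsU1, hsU2, hsU3, hsU4⟩ | ⟨hsD1, hsD2, hsD3, hsD4, hsD5, hsD6⟩ <;>
        rcases hclass t ht with heqt | heqt | heqt | heqt | heqt |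
            ⟨htU1, htU2, htU3, htU4⟩ | ⟨htD1, htD2, htD3, htD4, htD5, htD6⟩
      · rw [heqs, heqt, cfx, abs_le]
        omega
      · have hD : 1 ≤ G.dist x y := hdistpos hxy'
        rw [heqs, heqt, cfx, cfy, abs_le]
        omega
      · have hD : 1 ≤ G.dist x w := hdistpos (Ne.symm hwx)
        rw [heqs, heqt, cfx, cfw, abs_le]
        omega
      · rw [heqs, heqt, cfx, cfz, abs_le]
        omega
      · have hD : 2 ≤ G.dist x v1 := hdist2 (Ne.symm hv1x) hv1nx
        rw [heqs, heqt, cfx, cfv1, abs_le]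
        omega
      · have hD : 1 ≤ G.dist x t := hdistpos htU1.ne
        rw [heqs, cfx, cfU t htU1 htU2 htU3 htU4, abs_le]
        omega
      · have hD : 2 ≤ G.dist x t := hdist2 (Ne.symm htD2) htD6
        rw [heqs, cfx, cfD t htD1 htD2 htD3 htD4 htD5, abs_le]
        omega
      · have hD : 1 ≤ G.dist y x := hdistpos (Ne.symm hxy')
        rw [heqs, heqt, cfy, cfx, abs_le]
        omega
      · rw [heqs, heqt, cfy, abs_le]
        omega
      · have hD : 1 ≤ G.dist y w := hdistpos (Ne.symm hwy)
        rw [heqs, heqt, cfy, cfw, abs_le]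
        omega
      · have hD : 1 ≤ G.dist y z := hdistpos (Ne.symm hzy)
        rw [heqs, heqt, cfy, cfz, abs_le]
        omega
      · have hD : 1 ≤ G.dist y v1 := hdistpos (Ne.symm hv1y)
        rw [heqs, heqt, cfy, cfv1, abs_le]
        omega
      · have hD : 2 ≤ G.dist y t := hdist2 (Ne.symm htU2) (fun h => (hcomm htU1 h).elim htU3 htU4)
        rw [heqs, cfy, cfU t htU1 htU2 htU3 htU4, abs_le]
        omega
      · have hD : 1 ≤ G.dist y t := hdistpos htD1.ne
        rw [heqs, cfy, cfD t htD1 htD2 htD3 htD4 htD5, abs_le]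
        omega
      · have hD : 1 ≤ G.dist w x := hdistpos hwx
        rw [heqs, heqt, cfw, cfx, abs_le]
        omega
      · have hD : 1 ≤ G.dist w y := hdistpos hwy
        rw [heqs, heqt, cfw, cfy, abs_le]
        omega
      · rw [heqs, heqt, cfw, abs_le]
        omega
      · have hD : 1 ≤ G.dist w z := hdistpos hwz
        rw [heqs, heqt, cfw, cfz, abs_le]
        omega
      · have hD : 1 ≤ G.dist w v1 := hdistpos (Ne.symm hv1w)
        rw [heqs, heqt, cfw, cfv1, abs_le]
        omega
      · have hD : 2 ≤ G.dist w t := hdist2 (Ne.symm htU3) (fun h => hxw0 t htU1 h htU2)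
        rw [heqs, cfw, cfU t htU1 htU2 htU3 htU4, abs_le]
        omega
      · have hD : 2 ≤ G.dist w t := hdist2 (Ne.symm htD3) (fun h => htD5 (by
          have hmem : t ∈ (G.neighborSet y ∩ G.neighborSet w) \ {x} := ⟨⟨htD1, h⟩, htD2⟩
          rwa [hv1set, Set.mem_singleton_iff] at hmem))
        rw [heqs, cfw, cfD t htD1 htD2 htD3 htD4 htD5, abs_le]
        omega
      · rw [heqs, heqt, cfz, cfx, abs_le]
        omega
      · have hD : 1 ≤ G.dist z y := hdistpos hzy
        rw [heqs, heqt, cfz, cfy, abs_le]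
        omega
      · have hD : 1 ≤ G.dist z w := hdistpos (Ne.symm hwz)
        rw [heqs, heqt, cfz, cfw, abs_le]
        omega
      · rw [heqs, heqt, cfz, abs_le]
        omega
      · have hD : 2 ≤ G.dist z v1 := hdist2 (Ne.symm hv1z) (fun h => hyz0 v1 ayv1 h hv1x)
        rw [heqs, heqt, cfz, cfv1, abs_le]
        omega
      · have hD : 1 ≤ G.dist z t := hdistpos (Ne.symm htU4)
        rw [heqs, cfz, cfU t htU1 htU2 htU3 htU4, abs_le]
        omega
      · have hD : 2 ≤ G.dist z t := hdist2 (Ne.symm htD4) (fun h => hyz0 t htD1 h htD2)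
        rw [heqs, cfz, cfD t htD1 htD2 htD3 htD4 htD5, abs_le]
        omega
      · have hD : 2 ≤ G.dist v1 x := hdist2 hv1x (fun h => hv1nx h.symm)
        rw [heqs, heqt, cfv1, cfx, abs_le]
        omega
      · have hD : 1 ≤ G.dist v1 y := hdistpos hv1y
        rw [heqs, heqt, cfv1, cfy, abs_le]
        omega
      · have hD : 1 ≤ G.dist v1 w := hdistpos hv1w
        rw [heqs, heqt, cfv1, cfw, abs_le]
        omega
      · have hD : 2 ≤ G.dist v1 z := hdist2 hv1z (fun h => hyz0 v1 ayv1 h.symm hv1x)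
        rw [heqs, heqt, cfv1, cfz, abs_le]
        omega
      · rw [heqs, heqt, cfv1, abs_le]
        omega
      · have hD : 3 ≤ G.dist v1 t := by
          rw [SimpleGraph.dist_comm]
          exact hUV t v1 htU1 htU2 htU3 htU4 ayv1 hv1x hv1w hv1z
        rw [heqs, cfv1, cfU t htU1 htU2 htU3 htU4, abs_le]
        omega
      · have hD : 1 ≤ G.dist v1 t := hdistpos (Ne.symm htD5)
        rw [heqs, cfv1, cfD t htD1 htD2 htD3 htD4 htD5, abs_le]
        omega
      · have hD : 1 ≤ G.dist s x := hdistpos hsU1.ne'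
        rw [heqt, cfU s hsU1 hsU2 hsU3 hsU4, cfx, abs_le]
        omega
      · have hD : 2 ≤ G.dist s y := hdist2 hsU2 (fun h => (hcomm hsU1 h.symm).elim hsU3 hsU4)
        rw [heqt, cfU s hsU1 hsU2 hsU3 hsU4, cfy, abs_le]
        omega
      · have hD : 2 ≤ G.dist s w := hdist2 hsU3 (fun h => hxw0 s hsU1 h.symm hsU2)
        rw [heqt, cfU s hsU1 hsU2 hsU3 hsU4, cfw, abs_le]
        omega
      · have hD : 1 ≤ G.dist s z := hdistpos hsU4
        rw [heqt, cfU s hsU1 hsU2 hsU3 hsU4, cfz, abs_le]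
        omega
      · have hD : 3 ≤ G.dist s v1 := hUV s v1 hsU1 hsU2 hsU3 hsU4 ayv1 hv1x hv1w hv1z
        rw [heqt, cfU s hsU1 hsU2 hsU3 hsU4, cfv1, abs_le]
        omega
      · rw [cfU s hsU1 hsU2 hsU3 hsU4, cfU t htU1 htU2 htU3 htU4, abs_le]
        omega
      · have hD : 3 ≤ G.dist s t := hUV s t hsU1 hsU2 hsU3 hsU4 htD1 htD2 htD3 htD4
        rw [cfU s hsU1 hsU2 hsU3 hsU4, cfD t htD1 htD2 htD3 htD4 htD5, abs_le]
        omega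
      · have hD : 2 ≤ G.dist s x := hdist2 hsD2 (fun h => hsD6 h.symm)
        rw [heqt, cfD s hsD1 hsD2 hsD3 hsD4 hsD5, cfx, abs_le]
        omega
      · have hD : 1 ≤ G.dist s y := hdistpos hsD1.ne'
        rw [heqt, cfD s hsD1 hsD2 hsD3 hsD4 hsD5, cfy, abs_le]
        omega
      · have hD : 2 ≤ G.dist s w := hdist2 hsD3 (fun h => hsD5 (by
          have hmem : s ∈ (G.neighborSet y ∩ G.neighborSet w) \ {x} := ⟨⟨hsD1, h.symm⟩, hsD2⟩
          rwa [hv1set, Set.mem_singleton_iff] at hmem))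
        rw [heqt, cfD s hsD1 hsD2 hsD3 hsD4 hsD5, cfw, abs_le]
        omega
      · have hD : 2 ≤ G.dist s z := hdist2 hsD4 (fun h => hyz0 s hsD1 h.symm hsD2)
        rw [heqt, cfD s hsD1 hsD2 hsD3 hsD4 hsD5, cfz, abs_le]
        omega
      · have hD : 1 ≤ G.dist s v1 := hdistpos hsD5
        rw [heqt, cfD s hsD1 hsD2 hsD3 hsD4 hsD5, cfv1, abs_le]
        omega
      · have hD : 3 ≤ G.dist s t := by
          rw [SimpleGraph.dist_comm]
          exact hUV t s htU1 htU2 htU3 htU4 hsD1 hsD2 hsD3 hsD4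
        rw [cfD s hsD1 hsD2 hsD3 hsD4 hsD5, cfU t htU1 htU2 htU3 htU4, abs_le]
        omega
      · rw [cfD s hsD1 hsD2 hsD3 hsD4 hsD5, cfD t htD1 htD2 htD3 htD4 htD5, abs_le]
        omega
    obtain ⟨f, hfeq⟩ : ∃ f : V → ℤ,
        ∀ q, f q = S.inf' hSne (fun s => cf s + (G.dist s q : ℤ)) :=
      ⟨fun q => S.inf' hSne (fun s => cf s + (G.dist s q : ℤ)), fun q => rfl⟩
    have hfval : ∀ s ∈ S, f s = cf s := by
      intro s hs
      rw [hfeq s]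
      apply le_antisymm
      · calc S.inf' hSne (fun t => cf t + (G.dist t s : ℤ))
            ≤ cf s + (G.dist s s : ℤ) := Finset.inf'_le _ hs
        _ = cf s := by rw [SimpleGraph.dist_self]; push_cast; ring
      · apply Finset.le_inf'
        intro t ht
        have h := hpair t ht s hs
        rw [abs_le] at h
        omega
    have hfle : ∀ q q' : V, f q ≤ f q' + (G.dist q' q : ℤ) := by
      intro q q'
      obtain ⟨t, ht, hteq⟩ := Finset.exists_mem_eq_inf' hSne (fun s => cf s + (G.dist s q' : ℤ))
      have h1 : f q ≤ cf t + (G.dist t q : ℤ) := by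
        rw [hfeq q]
        exact Finset.inf'_le (fun s => cf s + (G.dist s q : ℤ)) ht
      have h2 : G.dist t q ≤ G.dist t q' + G.dist q' q := hconn.dist_triangle
      have h3 : f q' = cf t + (G.dist t q' : ℤ) := by rw [hfeq q']; exact hteq
      have h4 : (G.dist t q : ℤ) ≤ (G.dist t q' : ℤ) + (G.dist q' q : ℤ) := by
        exact_mod_cast h2
      omega
    have hLipf : ∀ u v : V, |f u - f v| ≤ (G.dist u v : ℤ) := by
      intro u v
      rw [abs_le]
      constructor
      · have h := hfle v u
        have e : G.dist u v = G.dist v u := SimpleGraph.dist_comm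
        omega
      · have h := hfle u v
        have e : G.dist v u = G.dist u v := SimpleGraph.dist_comm
        omega
    refine ⟨f, hLipf, by
      rw [hfval y hSy, hfval x hSx, cfy, cfx]
      ring, ?_⟩
    -- compute the value
    have hfx0 : f x = 0 := by rw [hfval x hSx, cfx]
    have hfy1 : f y = 1 := by rw [hfval y hSy, cfy]
    have hTx3 : ({y, w, z} : Finset V) ⊆ G.neighborFinset x := by
      intro q hq
      simp only [Finset.mem_insert, Finset.mem_singleton] at hq
      rw [mem_neighborFinset]
      rcases hq with rfl | rfl | rfl
      · exact hxy
      · exact axw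
      · exact axz
    have hTx3card : ({y, w, z} : Finset V).card = 3 := by
      rw [Finset.card_insert_of_notMem (by
          simp only [Finset.mem_insert, Finset.mem_singleton]
          push_neg
          exact ⟨hwy.symm, hzy.symm⟩),
        Finset.card_insert_of_notMem (by
          simp only [Finset.mem_singleton]
          exact hwz),
        Finset.card_singleton]
    have hZx : ∑ u ∈ G.neighborFinset x, (f u - f x) = cw + 4 - (G.degree x : ℤ) := by
      have hcongr : ∀ u ∈ G.neighborFinset x, f u - f x = cf u := by
        intro u hu
        rw [hfx0, hfval u (hSnx u ((mem_neighborFinset _ _ _).mp hu))]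
        ring
      rw [Finset.sum_congr rfl hcongr, ← Finset.sum_sdiff hTx3]
      have hsum1 : ∑ u ∈ ({y, w, z} : Finset V), cf u = 1 + cw := by
        rw [Finset.sum_insert (by
            simp only [Finset.mem_insert, Finset.mem_singleton]
            push_neg
            exact ⟨hwy.symm, hzy.symm⟩),
          Finset.sum_insert (by
            simp only [Finset.mem_singleton]
            exact hwz),
          Finset.sum_singleton, cfy, cfw, cfz]
        ring
      have hsum2 : ∑ u ∈ G.neighborFinset x \ ({y, w, z} : Finset V), cf u
          = ((G.neighborFinset x \ ({y, w, z} : Finset V)).card : ℤ) * (-1) := by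
        rw [Finset.sum_congr rfl (fun u hu => ?_), Finset.sum_const, nsmul_eq_mul]
        rw [Finset.mem_sdiff, Finset.mem_insert, Finset.mem_insert,
          Finset.mem_singleton, mem_neighborFinset] at hu
        push_neg at hu
        exact cfU u hu.1 hu.2.1 hu.2.2.1 hu.2.2.2
      have hcard : (G.neighborFinset x \ ({y, w, z} : Finset V)).card = G.degree x - 3 := by
        rw [Finset.card_sdiff_of_subset hTx3, hTx3card, hdxcard]
      rw [hsum1, hsum2, hcard]
      have : ((G.degree x - 3 : ℕ) : ℤ) = (G.degree x : ℤ) - 3 := by omega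
      rw [this]
      ring
    have hTy4 : ({x, w, z, v1} : Finset V) ⊆ G.neighborFinset y := hTy
    have hZy : ∑ v ∈ G.neighborFinset y, (f v - f y) = 2*cw + (G.degree y : ℤ) - 7 := by
      have hcongr : ∀ v ∈ G.neighborFinset y, f v - f y = cf v - 1 := by
        intro v hv
        rw [hfy1, hfval v (hSny v ((mem_neighborFinset _ _ _).mp hv))]
      rw [Finset.sum_congr rfl hcongr, Finset.sum_sub_distrib, Finset.sum_const,
        ← Finset.sum_sdiff hTy4]
      have hsum1 : ∑ v ∈ ({x, w, z, v1} : Finset V), cf v = 2*cw + 1 := by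
        rw [Finset.sum_insert (by
            simp only [Finset.mem_insert, Finset.mem_singleton]
            push_neg
            exact ⟨hwx.symm, hzx.symm, hv1x.symm⟩),
          Finset.sum_insert (by
            simp only [Finset.mem_insert, Finset.mem_singleton]
            push_neg
            exact ⟨hwz, hv1w.symm⟩),
          Finset.sum_insert (by
            simp only [Finset.mem_singleton]
            exact hv1z.symm),
          Finset.sum_singleton, cfx, cfw, cfz, cfv1]
        ring
      have hsum2 : ∑ v ∈ G.neighborFinset y \ ({x, w, z, v1} : Finset V), cf v
          = ((G.neighborFinset y \ ({x, w, z, v1} : Finset V)).card : ℤ) * 2 := by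
        rw [Finset.sum_congr rfl (fun v hv => ?_), Finset.sum_const, nsmul_eq_mul]
        rw [Finset.mem_sdiff, Finset.mem_insert, Finset.mem_insert, Finset.mem_insert,
          Finset.mem_singleton, mem_neighborFinset] at hv
        push_neg at hv
        exact cfD v hv.1 hv.2.1 hv.2.2.1 hv.2.2.2.1 hv.2.2.2.2
      have hcard : (G.neighborFinset y \ ({x, w, z, v1} : Finset V)).card
          = G.degree y - 4 := by
        rw [Finset.card_sdiff_of_subset hTy4, hTycard, hdycard]
      rw [hsum1, hsum2, hcard, hdycard]
      have h4 : ((G.degree y - 4 : ℕ) : ℤ) = (G.degree y : ℤ) - 4 := by omega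
      rw [h4]
      push_cast
      ring
    rw [graphLap, graphLap]
    have hcastx : ∑ u ∈ G.neighborFinset x, ((f u : ℝ) - (f x : ℝ))
        = ((cw : ℝ) + 4 - (G.degree x : ℝ)) := by
      have h := hZx
      have hc : ((∑ u ∈ G.neighborFinset x, (f u - f x) : ℤ) : ℝ)
          = ∑ u ∈ G.neighborFinset x, ((f u : ℝ) - (f x : ℝ)) := by
        push_cast
        rfl
      rw [← hc, h]
      push_cast
      ring
    have hcasty : ∑ v ∈ G.neighborFinset y, ((f v : ℝ) - (f y : ℝ))
        = (2*(cw : ℝ) + (G.degree y : ℝ) - 7) := by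
      have h := hZy
      have hc : ((∑ v ∈ G.neighborFinset y, (f v - f y) : ℤ) : ℝ)
          = ∑ v ∈ G.neighborFinset y, ((f v : ℝ) - (f y : ℝ)) := by
        push_cast
        rfl
      rw [← hc, h]
      push_cast
      ring
    rw [hcastx, hcasty]
    field_simp
    ring
  -- membership of the two candidate values
  have hmemB : (5:ℝ) / (G.degree x : ℝ) + 5 / (G.degree y : ℝ) - 2 ∈ Curv := by
    have h := hupper 1 (by norm_num) (by norm_num)
    norm_num at h
    exact h
  have hmemA : (4:ℝ) / (G.degree x : ℝ) + 7 / (G.degree y : ℝ) - 2 ∈ Curv := by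
    have h := hupper 0 (by norm_num) (by norm_num)
    norm_num at h
    exact h
  have hbdd : BddBelow Curv := by
    refine ⟨-2, fun r hr => ?_⟩
    obtain ⟨a, b, ha0, ha1, hb0, hb1, hle⟩ := hlow r hr
    have ha0R : (0:ℝ) ≤ (a:ℝ) := by exact_mod_cast ha0
    have ha1R : (a:ℝ) ≤ 1 := by exact_mod_cast ha1
    have hb0R : (0:ℝ) ≤ (b:ℝ) := by exact_mod_cast hb0
    have hb1R : (b:ℝ) ≤ 1 := by exact_mod_cast hb1
    have h1 : (0:ℝ) ≤ ((a:ℝ) + 2*b + 4) / (G.degree x : ℝ) :=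
      div_nonneg (by linarith) hdx0.le
    have h2 : (0:ℝ) ≤ (7 - 2*(a:ℝ) - b) / (G.degree y : ℝ) :=
      div_nonneg (by linarith) hdy0.le
    linarith
  have hdxy : (G.degree x : ℝ) ≤ (G.degree y : ℝ) := by exact_mod_cast hd
  constructor
  · intro hcase
    have hdyx : (G.degree y : ℝ) < 2 * (G.degree x : ℝ) := by exact_mod_cast hcase
    rw [hcurv_eq]
    apply le_antisymm
    · exact csInf_le hbdd hmemB
    · apply le_csInf ⟨_, hmemB⟩
      rintro r hr
      obtain ⟨a, b, ha0, ha1, hb0, hb1, hle⟩ := hlow r hr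
      have ha0R : (0:ℝ) ≤ (a:ℝ) := by exact_mod_cast ha0
      have ha1R : (a:ℝ) ≤ 1 := by exact_mod_cast ha1
      have hb0R : (0:ℝ) ≤ (b:ℝ) := by exact_mod_cast hb0
      have hb1R : (b:ℝ) ≤ 1 := by exact_mod_cast hb1
      have hnum : (0:ℝ) ≤ ((a:ℝ) + 2*b - 1) * (G.degree y : ℝ)
          + (2 - 2*(a:ℝ) - b) * (G.degree x : ℝ) := by
        nlinarith [mul_nonneg (sub_nonneg.mpr ha1R)
            (by linarith : (0:ℝ) ≤ 2*(G.degree x : ℝ) - (G.degree y : ℝ)),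
          mul_nonneg hb0R
            (by linarith : (0:ℝ) ≤ 2*(G.degree y : ℝ) - (G.degree x : ℝ))]
      have e : ((a:ℝ) + 2*b + 4) / (G.degree x : ℝ) + (7 - 2*(a:ℝ) - b) / (G.degree y : ℝ)
          - (5 / (G.degree x : ℝ) + 5 / (G.degree y : ℝ))
          = (((a:ℝ) + 2*b - 1) * (G.degree y : ℝ)
            + (2 - 2*(a:ℝ) - b) * (G.degree x : ℝ)) / ((G.degree x : ℝ) * (G.degree y : ℝ)) := by
        field_simp
        ring
      have hpos : (0:ℝ) ≤ ((a:ℝ) + 2*b + 4) / (G.degree x : ℝ)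
          + (7 - 2*(a:ℝ) - b) / (G.degree y : ℝ)
          - (5 / (G.degree x : ℝ) + 5 / (G.degree y : ℝ)) := by
        rw [e]
        exact div_nonneg hnum (by positivity)
      linarith
  · intro hcase
    have hdyx : 2 * (G.degree x : ℝ) ≤ (G.degree y : ℝ) := by exact_mod_cast hcase
    rw [hcurv_eq]
    apply le_antisymm
    · exact csInf_le hbdd hmemA
    · apply le_csInf ⟨_, hmemA⟩
      rintro r hr
      obtain ⟨a, b, ha0, ha1, hb0, hb1, hle⟩ := hlow r hr
      have ha0R : (0:ℝ) ≤ (a:ℝ) := by exact_mod_cast ha0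
      have ha1R : (a:ℝ) ≤ 1 := by exact_mod_cast ha1
      have hb0R : (0:ℝ) ≤ (b:ℝ) := by exact_mod_cast hb0
      have hb1R : (b:ℝ) ≤ 1 := by exact_mod_cast hb1
      have hnum : (0:ℝ) ≤ ((a:ℝ) + 2*b) * (G.degree y : ℝ)
          - (2*(a:ℝ) + b) * (G.degree x : ℝ) := by
        nlinarith [mul_nonneg ha0R
            (by linarith : (0:ℝ) ≤ (G.degree y : ℝ) - 2*(G.degree x : ℝ)),
          mul_nonneg hb0R
            (by linarith : (0:ℝ) ≤ 2*(G.degree y : ℝ) - (G.degree x : ℝ))]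
      have e : ((a:ℝ) + 2*b + 4) / (G.degree x : ℝ) + (7 - 2*(a:ℝ) - b) / (G.degree y : ℝ)
          - (4 / (G.degree x : ℝ) + 7 / (G.degree y : ℝ))
          = (((a:ℝ) + 2*b) * (G.degree y : ℝ)
            - (2*(a:ℝ) + b) * (G.degree x : ℝ)) / ((G.degree x : ℝ) * (G.degree y : ℝ)) := by
        field_simp
        ring
      have hpos : (0:ℝ) ≤ ((a:ℝ) + 2*b + 4) / (G.degree x : ℝ)
          + (7 - 2*(a:ℝ) - b) / (G.degree y : ℝ)
          - (4 / (G.degree x : ℝ) + 7 / (G.degree y : ℝ)) := by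
        rw [e]
        exact div_nonneg hnum (by positivity)
      linarith
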